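/- Let D(n,d,l) denote the sum of the weights ω(mz) over all Motzkin paths mz of width n, area d, and last fall length l, with the convention that D(n,d,l) = 0 whenever n < 0, d < 0 or l < 0, and base case D(0,0,0) = 1. Then for all n ≥ 1, all d ≥ 0 and all l ≥ 0, the recurrence D(n,d,l) = (2l+1)·Σ_{l' ≥ l} D(n−1, d−l, l') + l²·Σ_{l' ≥ l−1} D(n−2, d−(2l−1), l') holds. -/

import Mathlib

/-- Moves of a Motzkin path: Up-right, Horizontal-right, Down-right. -/
inductive Move : Type
  | U : Move
  | H : Move
  | D : Move
deriving DecidableEq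

open Move

/-- The vertical step of a move. -/
def Move.step : Move → ℤ
  | U => 1
  | H => 0
  | D => -1

/-- The height of a path after its first `i` moves. -/
def heightAt (mz : List Move) (i : ℕ) : ℤ :=
  ((mz.take i).map Move.step).sum

/-- A word over {U,H,D} is a Motzkin path if it never goes below the x-axis
and ends on the x-axis. -/
def IsMotzkin (mz : List Move) : Prop :=
  (∀ i, 0 ≤ heightAt mz i) ∧ heightAt mz mz.length = 0

/-- The area between the x-axis and the path (sum of heights at integer points). -/
def area (mz : List Move) : ℤ :=
  ∑ i ∈ Finset.range (mz.length + 1), heightAt mz i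

/-- `MZ n A` is the set of Motzkin paths of width `n` and area `A`. -/
def MZ (n A : ℕ) : Set (List Move) :=
  {mz | mz.length = n ∧ IsMotzkin mz ∧ area mz = A}

/-- The weight `ω_i` of the `i`-th move (0-indexed): it is `h_i` for U and D moves
(height after the move for U, before the move for D) and `2h_i + 1` for H moves. -/
def moveWeight (mz : List Move) (i : ℕ) : ℤ :=
  match mz[i]? with
  | some U => heightAt mz (i + 1)
  | some D => heightAt mz i
  | some H => 2 * heightAt mz i + 1
  | none => 1

/-- The weight `ω(mz)` of a Motzkin path. -/
def weight (mz : List Move) : ℤ :=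
  ∏ i ∈ Finset.range mz.length, moveWeight mz i

/-- The total displacement `D(π) = Σ_i |i - π(i)|` of a permutation. -/
def totalDisp {n : ℕ} (π : Equiv.Perm (Fin n)) : ℤ :=
  ∑ i : Fin n, |((π i : ℕ) : ℤ) - ((i : ℕ) : ℤ)|

/-- The word over {U,H,D} associated to a permutation. -/
def toPath {n : ℕ} (π : Equiv.Perm (Fin n)) : List Move :=
  (List.finRange n).map fun i : Fin n =>
    if (i : ℕ) < (π i : ℕ) ∧ (i : ℕ) < (π.symm i : ℕ) then U
    else if (π i : ℕ) < (i : ℕ) ∧ (π.symm i : ℕ) < (i : ℕ) then D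
    else H

/-- The last fall length: the length of the maximal suffix consisting of D moves. -/
def lastFall (mz : List Move) : ℕ :=
  (mz.reverse.takeWhile (fun m => decide (m = D))).length

/-- The maximum height of a path. -/
def maxHeight (mz : List Move) : ℕ :=
  (Finset.range (mz.length + 1)).sup fun i => (heightAt mz i).toNat

/-- `flatsAt mz k` is the number of H moves of `mz` made at height `k`. -/
def flatsAt (mz : List Move) (k : ℕ) : ℕ :=
  ((Finset.range mz.length).filter fun j => mz[j]? = some H ∧ heightAt mz j = (k : ℤ)).card

/-- `peaksAt mz k` is the number of U moves of `mz` ending at height `k`. -/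
def peaksAt (mz : List Move) (k : ℕ) : ℕ :=
  ((Finset.range mz.length).filter fun j => mz[j]? = some U ∧ heightAt mz (j + 1) = (k : ℤ)).card

/-- `downsAt mz k` is the number of D moves of `mz` starting at height `k`. -/
def downsAt (mz : List Move) (k : ℕ) : ℕ :=
  ((Finset.range mz.length).filter fun j => mz[j]? = some D ∧ heightAt mz j = (k : ℤ)).card

/-- A candidate building sequence `(f_0, p_1, f_1, …, p_h, f_h)`, recorded as its
height `h` together with the flat counts `f` and peak counts `p`. -/
structure BSeq where
  h : ℕ
  f : ℕ → ℕ
  p : ℕ → ℕ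

/-- `Sset n A` is the set of building sequences for width `n` and area `A`:
all `p`-entries `p_1, …, p_h` are positive, entries beyond the height are zero, and the
width and area conditions hold. -/
def Sset (n A : ℕ) : Set BSeq :=
  {a | (∀ i, 1 ≤ i → i ≤ a.h → 0 < a.p i) ∧
       a.p 0 = 0 ∧
       (∀ i, a.h < i → a.p i = 0) ∧
       (∀ i, a.h < i → a.f i = 0) ∧
       (∑ i ∈ Finset.range (a.h + 1), a.f i) + 2 * (∑ i ∈ Finset.Icc 1 a.h, a.p i) = n ∧
       (∑ i ∈ Finset.range (a.h + 1), i * a.f i) +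
         (∑ i ∈ Finset.Icc 1 a.h, (2 * i - 1) * a.p i) = A}

/-- `mz` has building sequence `a`. -/
def hasBuildSeq (mz : List Move) (a : BSeq) : Prop :=
  maxHeight mz = a.h ∧ (∀ i, flatsAt mz i = a.f i) ∧ (∀ i, peaksAt mz i = a.p i)

/-- `perm(a) = ∏_{i=0}^h (2i+1)^{f_i} · ∏_{i=1}^h i^{2p_i}`. -/
def permWeight (a : BSeq) : ℕ :=
  (∏ i ∈ Finset.range (a.h + 1), (2 * i + 1) ^ a.f i) *
    ∏ i ∈ Finset.Icc 1 a.h, i ^ (2 * a.p i)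

/-- `m(a)`, the number of Motzkin paths with building sequence `a`. -/
def mcount (a : BSeq) : ℕ :=
  Nat.choose (a.f a.h + a.p a.h - 1) (a.p a.h - 1) *
    (∏ i ∈ Finset.Icc 1 (a.h - 1),
      Nat.choose (a.p (i + 1) + a.f i) (a.f i) *
        Nat.choose (a.p (i + 1) + a.f i + a.p i - 1) (a.p i - 1)) *
    Nat.choose (a.p 1 + a.f 0) (a.f 0)

/-- `M(n,A,l)`: the number of Motzkin paths of width `n`, area `A` and last fall length `l`
(for negative arguments there are no such paths, so the value is `0`; the value at
`(0,0,0)` is `1`, counting the empty path). -/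
noncomputable def Mcount (n A l : ℤ) : ℕ :=
  Nat.card {mz : List Move // (mz.length : ℤ) = n ∧ IsMotzkin mz ∧ area mz = A ∧
    (lastFall mz : ℤ) = l}

/-- `D(n,d,l)`: the sum of the weights of all Motzkin paths of width `n`, area `d` and
last fall length `l`. -/
noncomputable def Dw (n d l : ℤ) : ℤ :=
  ∑ᶠ mz ∈ {mz : List Move | (mz.length : ℤ) = n ∧ IsMotzkin mz ∧ area mz = d ∧
    (lastFall mz : ℤ) = l}, weight mz

/-- `M(n,A,h,p)`: the number of Motzkin paths of width `n`, area `A`, maximum height `h`,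
with exactly `p` U-moves ending at height `h` and no H-moves at height `h`. -/
noncomputable def Mtop (n A h p : ℤ) : ℕ :=
  Nat.card {mz : List Move // (mz.length : ℤ) = n ∧ IsMotzkin mz ∧ area mz = A ∧
    (maxHeight mz : ℤ) = h ∧ (peaksAt mz h.toNat : ℤ) = p ∧ flatsAt mz h.toNat = 0}

/-- `D(n,d,h,p)`: the sum of weights of Motzkin paths of width `n`, area `d`,
maximum height `h`, with exactly `p` U-moves ending at height `h` and no H-moves at height `h`. -/
noncomputable def Dtop (n d h p : ℤ) : ℤ :=
  ∑ᶠ mz ∈ {mz : List Move | (mz.length : ℤ) = n ∧ IsMotzkin mz ∧ area mz = d ∧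
    (maxHeight mz : ℤ) = h ∧ (peaksAt mz h.toNat : ℤ) = p ∧ flatsAt mz h.toNat = 0}, weight mz

/-- The area under the first `i` moves of a path (trapezoid rule; may be a half-integer). -/
def prefixArea (mz : List Move) (i : ℕ) : ℚ :=
  ∑ j ∈ Finset.range i, ((heightAt mz j : ℚ) + (heightAt mz (j + 1) : ℚ)) / 2

open Move

instance : Fintype Move := ⟨{U, H, D}, by intro x; cases x <;> simp⟩

lemma heightAt_zero (v : List Move) : heightAt v 0 = 0 := by simp [heightAt]

lemma heightAt_append_le (u w : List Move) {i : ℕ} (h : i ≤ u.length) :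
    heightAt (u ++ w) i = heightAt u i := by
  unfold heightAt
  rw [List.take_append, Nat.sub_eq_zero_of_le h, List.take_zero, List.append_nil]

lemma heightAt_append_add (u w : List Move) (j : ℕ) :
    heightAt (u ++ w) (u.length + j) = heightAt u u.length + heightAt w j := by
  unfold heightAt
  rw [List.take_append, List.take_of_length_le (by omega),
    Nat.add_sub_cancel_left, List.map_append, List.sum_append, List.take_length]

lemma heightAt_stable (v : List Move) {i : ℕ} (h : v.length ≤ i) :
    heightAt v i = heightAt v v.length := by
  unfold heightAt; rw [List.take_of_length_le h, List.take_length]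

lemma heightAt_cons (x : Move) (w : List Move) (j : ℕ) :
    heightAt (x :: w) (j + 1) = x.step + heightAt w j := by
  simp [heightAt, List.take_succ_cons]

lemma heightAt_replicate_D (k j : ℕ) :
    heightAt (List.replicate k D) j = -((min j k : ℕ) : ℤ) := by
  unfold heightAt
  rw [List.take_replicate, List.map_replicate, List.sum_replicate]
  simp [Move.step]

lemma area_append (u w : List Move) :
    area (u ++ w) = area u + w.length * heightAt u u.length + area w := by
  unfold area
  rw [List.length_append,
    show u.length + w.length + 1 = (u.length + 1) + w.length by omega,
    Finset.sum_range_add]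
  have h1 : ∑ i ∈ Finset.range (u.length + 1), heightAt (u ++ w) i
      = ∑ i ∈ Finset.range (u.length + 1), heightAt u i :=
    Finset.sum_congr rfl fun i hi => heightAt_append_le u w (by
      simp only [Finset.mem_range] at hi; omega)
  rw [h1]
  have h2 : ∀ i ∈ Finset.range w.length,
      heightAt (u ++ w) (u.length + 1 + i) = heightAt u u.length + heightAt w (i + 1) := by
    intro i _
    rw [show u.length + 1 + i = u.length + (i + 1) by omega, heightAt_append_add]
  rw [Finset.sum_congr rfl h2, Finset.sum_add_distrib, Finset.sum_const, Finset.card_range,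
    Finset.sum_range_succ' (fun i => heightAt w i), heightAt_zero]
  push_cast
  ring

lemma moveWeight_append_left (u w : List Move) {i : ℕ} (h : i < u.length) :
    moveWeight (u ++ w) i = moveWeight u i := by
  unfold moveWeight
  rw [List.getElem?_append_left h]
  rcases h' : u[i]? with _ | x
  · rfl
  · cases x <;>
      simp [heightAt_append_le u w (by omega : i ≤ u.length),
        heightAt_append_le u w (by omega : i + 1 ≤ u.length)]

lemma weight_append (u w : List Move) :
    weight (u ++ w) = weight u * ∏ j ∈ Finset.range w.length, moveWeight (u ++ w) (u.length + j) := by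
  unfold weight
  rw [List.length_append, Finset.prod_range_add]
  congr 1
  exact Finset.prod_congr rfl fun i hi =>
    moveWeight_append_left u w (by simp only [Finset.mem_range] at hi; omega)
lemma heightAt_one (x : Move) : heightAt [x] 1 = x.step := by simp [heightAt]

lemma endH_snoc (v : List Move) (x : Move) :
    heightAt (v ++ [x]) (v.length + 1) = heightAt v v.length + x.step := by
  rw [heightAt_append_add, heightAt_one]

lemma area_snoc (v : List Move) (x : Move) :
    area (v ++ [x]) = area v + heightAt v v.length + x.step := by
  rw [area_append]
  have : area [x] = x.step := by
    simp [area, Finset.sum_range_succ, heightAt_zero, heightAt_one]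
  rw [this, List.length_singleton]; push_cast; ring

lemma weight_snoc (v : List Move) (x : Move) :
    weight (v ++ [x]) = weight v * moveWeight (v ++ [x]) v.length := by
  rw [weight_append]; simp

lemma getElem?_snoc (v : List Move) (x : Move) : (v ++ [x])[v.length]? = some x := by
  rw [List.getElem?_append_right (le_refl _)]; simp

lemma heightAt_tail0 (v : List Move) (k j : ℕ) :
    heightAt (v ++ List.replicate k D) (v.length + j)
      = heightAt v v.length - ((min j k : ℕ) : ℤ) := by
  rw [heightAt_append_add, heightAt_replicate_D]; ring

lemma length_tail0 (v : List Move) (k : ℕ) :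
    (v ++ List.replicate k D).length = v.length + k := by simp

lemma isMotzkin_tail0 (v : List Move) (k : ℕ)
    (hend : heightAt v v.length = (k : ℤ)) (hnn : ∀ i, 0 ≤ heightAt v i) :
    IsMotzkin (v ++ List.replicate k D) := by
  constructor
  · intro i
    rcases le_or_gt i v.length with h | h
    · rw [heightAt_append_le _ _ h]; exact hnn i
    · have : i = v.length + (i - v.length) := by omega
      rw [this, heightAt_tail0, hend]
      have h2 : min (i - v.length) k ≤ k := min_le_right _ _
      omega
  · rw [length_tail0, heightAt_tail0, hend]
    simp

lemma area_tail0 (v : List Move) (k : ℕ) (hend : heightAt v v.length = (k : ℤ)) :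
    area (v ++ List.replicate k D)
      = area v + (k : ℤ) * k - ∑ i ∈ Finset.range (k + 1), (i : ℤ) := by
  rw [area_append, hend]
  have : area (List.replicate k D) = -∑ i ∈ Finset.range (k + 1), (i : ℤ) := by
    unfold area
    rw [List.length_replicate, ← Finset.sum_neg_distrib]
    refine Finset.sum_congr rfl fun i hi => ?_
    rw [heightAt_replicate_D]
    simp only [Finset.mem_range] at hi
    have : min i k = i := by omega
    rw [this]
  rw [this]
  simp; ring

lemma weight_tail0 (v : List Move) (k : ℕ) (hend : heightAt v v.length = (k : ℤ)) :
    weight (v ++ List.replicate k D)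
      = weight v * ∏ j ∈ Finset.range k, ((k : ℤ) - j) := by
  rw [weight_append]
  congr 1
  rw [List.length_replicate]
  refine Finset.prod_congr rfl fun j hj => ?_
  simp only [Finset.mem_range] at hj
  have hg : (v ++ List.replicate k D)[v.length + j]? = some D := by
    rw [List.getElem?_append_right (by omega)]
    simp [Nat.add_sub_cancel_left, List.getElem?_replicate, hj]
  unfold moveWeight
  rw [hg]
  rw [heightAt_tail0, hend]
  have : min j k = j := by omega
  rw [this]

lemma takeWhile_replicate_append {p : Move → Bool} {a : Move} (hp : p a) (t : List Move) (k : ℕ) :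
    (List.replicate k a ++ t).takeWhile p = List.replicate k a ++ t.takeWhile p := by
  induction k with
  | zero => simp
  | succ k ih => simp [List.replicate_succ, List.takeWhile_cons, hp, ih]

lemma lastFall_tail0 (v : List Move) (k : ℕ) :
    lastFall (v ++ List.replicate k D) = lastFall v + k := by
  unfold lastFall
  rw [List.reverse_append, List.reverse_replicate,
    takeWhile_replicate_append (by simp)]
  simp [add_comm]

lemma lastFall_tail1 (v : List Move) (x : Move) (k : ℕ) (hx : x ≠ D) :
    lastFall (v ++ x :: List.replicate k D) = k := by
  have : v ++ x :: List.replicate k D = (v ++ [x]) ++ List.replicate k D := by simp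
  rw [this]
  unfold lastFall
  rw [List.reverse_append, List.reverse_replicate,
    takeWhile_replicate_append (by simp), List.reverse_append]
  simp [List.takeWhile_cons, hx]

lemma lastFall_le_length (mz : List Move) : lastFall mz ≤ mz.length := by
  unfold lastFall
  have := (List.takeWhile_prefix (l := mz.reverse) (fun m => decide (m = D))).length_le
  simpa using this
lemma takeWhile_eq_replicate (mz : List Move) :
    mz.reverse.takeWhile (fun m => decide (m = D)) = List.replicate (lastFall mz) D := by
  rw [List.eq_replicate_iff]
  refine ⟨rfl, ?_⟩
  intro b hb
  have := List.mem_takeWhile_imp hb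
  simpa using this

lemma decomp0 (mz : List Move) :
    mz = (mz.reverse.dropWhile (fun m => decide (m = D))).reverse
        ++ List.replicate (lastFall mz) D ∧
    (mz.reverse.dropWhile (fun m => decide (m = D))).length = mz.length - lastFall mz := by
  have h1 := takeWhile_eq_replicate mz
  have h2 : mz.reverse.takeWhile (fun m => decide (m = D))
      ++ mz.reverse.dropWhile (fun m => decide (m = D)) = mz.reverse :=
    List.takeWhile_append_dropWhile ..
  constructor
  · conv_lhs => rw [← mz.reverse_reverse, ← h2]
    rw [List.reverse_append, h1, List.reverse_replicate]
  · have h3 : (mz.reverse.takeWhile (fun m => decide (m = D))).length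
        + (mz.reverse.dropWhile (fun m => decide (m = D))).length = mz.length := by
      rw [← List.length_append, h2, List.length_reverse]
    have h4 : (mz.reverse.takeWhile (fun m => decide (m = D))).length = lastFall mz := rfl
    omega

lemma decomp_ge (mz : List Move) {L : ℕ} (h : L ≤ lastFall mz) :
    ∃ v : List Move, v.length = mz.length - L ∧ mz = v ++ List.replicate L D := by
  obtain ⟨h1, h2⟩ := decomp0 mz
  have hle := lastFall_le_length mz
  refine ⟨(mz.reverse.dropWhile (fun m => decide (m = D))).reverse
      ++ List.replicate (lastFall mz - L) D, ?_, ?_⟩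
  · simp [h2]; omega
  · conv_lhs => rw [h1]
    rw [List.append_assoc, ← List.replicate_add]
    congr 2
    omega

lemma decomp_exact (mz : List Move) (h : lastFall mz < mz.length) :
    ∃ (v : List Move) (x : Move), x ≠ D ∧ v.length = mz.length - lastFall mz - 1 ∧
      mz = v ++ x :: List.replicate (lastFall mz) D := by
  obtain ⟨h1, h2⟩ := decomp0 mz
  set w := mz.reverse.dropWhile (fun m => decide (m = D)) with hw
  have hne : w ≠ [] := by
    intro hcon
    rw [hcon] at h2
    simp at h2
    omega
  have hhead : w.head hne ≠ D := by
    have := List.head_dropWhile_not (fun m => decide (m = D)) (l := mz.reverse) hne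
    simpa using this
  refine ⟨w.tail.reverse, w.head hne, hhead, ?_, ?_⟩
  · have : w.tail.length = w.length - 1 := List.length_tail (l := w)
    simp [this, h2]
  · conv_lhs => rw [h1]
    conv_lhs => rw [← List.cons_head_tail hne]
    rw [List.reverse_cons, List.append_assoc]
    rfl

lemma heightAt_cons_tail (x : Move) (k j : ℕ) :
    heightAt (x :: List.replicate k D) (j + 1) = x.step - ((min j k : ℕ) : ℤ) := by
  rw [heightAt_cons, heightAt_replicate_D]; ring

lemma endH_of_motzkin_tail0 (v : List Move) (k : ℕ)
    (hm : IsMotzkin (v ++ List.replicate k D)) : heightAt v v.length = (k : ℤ) := by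
  have := hm.2
  rw [length_tail0, heightAt_tail0] at this
  simp at this
  omega

lemma endH_of_motzkin_tail1 (v : List Move) (x : Move) (k : ℕ)
    (hm : IsMotzkin (v ++ x :: List.replicate k D)) :
    heightAt v v.length = (k : ℤ) - x.step := by
  have := hm.2
  have hlen : (v ++ x :: List.replicate k D).length = v.length + (k + 1) := by
    simp [add_comm]
  rw [hlen, heightAt_append_add, heightAt_cons_tail] at this
  simp at this
  omega
/-- Gauss sum term. -/
def Gs (k : ℕ) : ℤ := ∑ i ∈ Finset.range (k + 1), (i : ℤ)

/-- Falling product `k (k-1) ⋯ 1`. -/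
def Pf (k : ℕ) : ℤ := ∏ j ∈ Finset.range k, ((k : ℤ) - j)

/-- Prefixes: nonnegative words of given length, end height and area. -/
def TF (m : ℕ) (a h : ℤ) : Set (List Move) :=
  {v | v.length = m ∧ (∀ i, 0 ≤ heightAt v i) ∧ heightAt v v.length = h ∧ area v = a}

lemma TF_finite (m : ℕ) (a h : ℤ) : (TF m a h).Finite :=
  (List.finite_length_eq Move m).subset fun v hv => hv.1

lemma nonneg_of_motzkin_tail (v w : List Move) (hm : ∀ i, 0 ≤ heightAt (v ++ w) i) :
    ∀ i, 0 ≤ heightAt v i := by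
  intro i
  rcases le_or_gt i v.length with h | h
  · rw [← heightAt_append_le v w h]; exact hm i
  · rw [heightAt_stable v (by omega : v.length ≤ i),
      ← heightAt_append_le v w (le_refl _)]
    exact hm v.length

lemma getElem?_mid (v t : List Move) (x : Move) : (v ++ x :: t)[v.length]? = some x := by
  rw [List.getElem?_append_right (le_refl _)]; simp

lemma endH_snoc' (v : List Move) (x : Move) (k : ℕ)
    (hend : heightAt v v.length = (k : ℤ) - x.step) :
    heightAt (v ++ [x]) ((v ++ [x]).length) = (k : ℤ) := by
  rw [List.length_append, List.length_singleton, endH_snoc, hend]; ring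

lemma nonneg_snoc (v : List Move) (x : Move) (k : ℕ)
    (hend : heightAt v v.length = (k : ℤ) - x.step)
    (hnn : ∀ i, 0 ≤ heightAt v i) : ∀ i, 0 ≤ heightAt (v ++ [x]) i := by
  intro i
  rcases le_or_gt i v.length with h | h
  · rw [heightAt_append_le v [x] h]; exact hnn i
  · rw [heightAt_stable (v ++ [x]) (by simp; omega : (v ++ [x]).length ≤ i), endH_snoc' v x k hend]
    positivity

lemma assoc1 (v : List Move) (x : Move) (k : ℕ) :
    v ++ x :: List.replicate k D = (v ++ [x]) ++ List.replicate k D := by simp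

lemma isMotzkin_tail1 (v : List Move) (x : Move) (k : ℕ)
    (hend : heightAt v v.length = (k : ℤ) - x.step)
    (hnn : ∀ i, 0 ≤ heightAt v i) : IsMotzkin (v ++ x :: List.replicate k D) := by
  rw [assoc1]
  exact isMotzkin_tail0 _ _ (endH_snoc' v x k hend) (nonneg_snoc v x k hend hnn)

lemma area_tail1 (v : List Move) (x : Move) (k : ℕ)
    (hend : heightAt v v.length = (k : ℤ) - x.step) :
    area (v ++ x :: List.replicate k D) = area v + k + (k : ℤ) * k - Gs k := by
  rw [assoc1, area_tail0 _ _ (endH_snoc' v x k hend), area_snoc, hend, Gs]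
  ring

lemma weight_tail1_H (v : List Move) (k : ℕ)
    (hend : heightAt v v.length = (k : ℤ)) :
    weight (v ++ H :: List.replicate k D) = (2 * (k : ℤ) + 1) * Pf k * weight v := by
  have hend' : heightAt v v.length = (k : ℤ) - Move.step H := by
    simpa [Move.step] using hend
  rw [assoc1, weight_tail0 _ _ (endH_snoc' v H k hend'), weight_snoc]
  have : moveWeight (v ++ [H]) v.length = 2 * (k : ℤ) + 1 := by
    unfold moveWeight
    rw [getElem?_snoc, heightAt_append_le v [H] (le_refl _), hend]
  rw [this, Pf]; ring

lemma weight_tail1_U (v : List Move) (k : ℕ)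
    (hend : heightAt v v.length = (k : ℤ) - 1) :
    weight (v ++ U :: List.replicate k D) = (k : ℤ) * Pf k * weight v := by
  have hend' : heightAt v v.length = (k : ℤ) - Move.step U := by
    simpa [Move.step] using hend
  rw [assoc1, weight_tail0 _ _ (endH_snoc' v U k hend'), weight_snoc]
  have : moveWeight (v ++ [U]) v.length = (k : ℤ) := by
    unfold moveWeight
    rw [getElem?_snoc, endH_snoc, hend]
    simp [Move.step]
  rw [this, Pf]; ring

lemma take_cancel (v : List Move) (w : List Move) : (v ++ w).take v.length = v :=
  List.take_left' rfl
lemma finsum_mem_const_mul {α : Type*} {s : Set α} (hs : s.Finite) (c : ℤ) (f : α → ℤ) :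
    ∑ᶠ v ∈ s, c * f v = c * ∑ᶠ v ∈ s, f v := by
  rw [finsum_mem_eq_finite_toFinset_sum _ hs, finsum_mem_eq_finite_toFinset_sum _ hs,
    Finset.mul_sum]

lemma SUM_tail0 (m k : ℕ) (dd : ℤ) :
    ∑ᶠ mz ∈ {mz : List Move | mz.length = m + k ∧ IsMotzkin mz ∧
        area mz = dd ∧ k ≤ lastFall mz}, weight mz
      = Pf k * ∑ᶠ v ∈ TF m (dd - (k : ℤ) * k + Gs k) (k : ℤ), weight v := by
  rw [← finsum_mem_const_mul (TF_finite m _ _) (Pf k) weight]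
  refine (finsum_mem_eq_of_bijOn (fun v => v ++ List.replicate k D) ⟨?_, ?_, ?_⟩ ?_).symm
  · rintro v ⟨hlen, hnn, hend, harea⟩
    refine ⟨by simp [hlen], isMotzkin_tail0 v k hend hnn, ?_, ?_⟩
    · rw [area_tail0 v k hend, harea]; simp only [Gs]; ring
    · rw [lastFall_tail0]; omega
  · rintro v ⟨hv1, -⟩ v' ⟨hv'1, -⟩ he
    have h1 : v = (v ++ List.replicate k D).take m := by rw [← hv1, take_cancel]
    have h2 : v' = (v' ++ List.replicate k D).take m := by rw [← hv'1, take_cancel]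
    rw [h1, h2]
    exact congrArg (List.take m) he
  · rintro mz ⟨hlen, hm, ha, hlf⟩
    obtain ⟨v, hvlen, heq⟩ := decomp_ge mz hlf
    rw [heq] at hm ha
    have hend := endH_of_motzkin_tail0 v k hm
    have hnn := nonneg_of_motzkin_tail v _ hm.1
    have harea : area v = dd - (k : ℤ) * k + Gs k := by
      rw [area_tail0 v k hend] at ha
      simp only [Gs]
      linarith [ha]
    exact ⟨v, ⟨by omega, hnn, hend, harea⟩, heq.symm⟩
  · rintro v ⟨-, -, hend, -⟩
    rw [weight_tail0 v k hend]; simp only [Pf]; ring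

lemma SUM_tail1_H (m k : ℕ) (dd : ℤ) :
    ∑ᶠ mz ∈ {mz : List Move | mz.length = m + 1 + k ∧ IsMotzkin mz ∧
        area mz = dd ∧ lastFall mz = k ∧ mz[m]? = some H}, weight mz
      = (2 * (k : ℤ) + 1) * Pf k *
          ∑ᶠ v ∈ TF m (dd - k - (k : ℤ) * k + Gs k) (k : ℤ), weight v := by
  rw [← finsum_mem_const_mul (TF_finite m _ _) ((2 * (k : ℤ) + 1) * Pf k) weight]
  refine (finsum_mem_eq_of_bijOn (fun v => v ++ H :: List.replicate k D) ⟨?_, ?_, ?_⟩ ?_).symm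
  · rintro v ⟨hlen, hnn, hend, harea⟩
    have hend' : heightAt v v.length = (k : ℤ) - Move.step H := by
      rw [hend]; simp [Move.step]
    refine ⟨by simp [hlen]; omega, isMotzkin_tail1 v H k hend' hnn, ?_, ?_, ?_⟩
    · rw [area_tail1 v H k hend', harea]; ring
    · exact lastFall_tail1 v H k (by simp)
    · rw [← hlen]; exact getElem?_mid v _ H
  · rintro v ⟨hv1, -⟩ v' ⟨hv'1, -⟩ he
    have h1 : v = (v ++ H :: List.replicate k D).take m := by rw [← hv1, take_cancel]
    have h2 : v' = (v' ++ H :: List.replicate k D).take m := by rw [← hv'1, take_cancel]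
    rw [h1, h2]
    exact congrArg (List.take m) he
  · rintro mz ⟨hlen, hm, ha, hlf, hget⟩
    obtain ⟨v, x, hx, hvlen, heq⟩ := decomp_exact mz (by omega)
    rw [hlf] at heq hvlen
    have hvm : v.length = m := by omega
    have hxH : x = H := by
      rw [heq, ← hvm] at hget
      rw [getElem?_mid] at hget
      exact (Option.some_inj.mp hget)
    subst hxH
    rw [heq] at hm ha
    have hend := endH_of_motzkin_tail1 v H k hm
    have hend' : heightAt v v.length = (k : ℤ) := by
      rw [hend]; simp [Move.step]
    have hnn := nonneg_of_motzkin_tail v _ hm.1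
    have harea : area v = dd - k - (k : ℤ) * k + Gs k := by
      rw [area_tail1 v H k hend] at ha
      linarith [ha]
    exact ⟨v, ⟨hvm, hnn, hend', harea⟩, heq.symm⟩
  · rintro v ⟨-, -, hend, -⟩
    rw [weight_tail1_H v k hend]

lemma SUM_tail1_U (m k : ℕ) (dd : ℤ) :
    ∑ᶠ mz ∈ {mz : List Move | mz.length = m + 1 + k ∧ IsMotzkin mz ∧
        area mz = dd ∧ lastFall mz = k ∧ mz[m]? = some U}, weight mz
      = (k : ℤ) * Pf k *
          ∑ᶠ v ∈ TF m (dd - k - (k : ℤ) * k + Gs k) ((k : ℤ) - 1), weight v := by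
  rw [← finsum_mem_const_mul (TF_finite m _ _) ((k : ℤ) * Pf k) weight]
  refine (finsum_mem_eq_of_bijOn (fun v => v ++ U :: List.replicate k D) ⟨?_, ?_, ?_⟩ ?_).symm
  · rintro v ⟨hlen, hnn, hend, harea⟩
    have hend' : heightAt v v.length = (k : ℤ) - Move.step U := by
      rw [hend]; simp [Move.step]
    refine ⟨by simp [hlen]; omega, isMotzkin_tail1 v U k hend' hnn, ?_, ?_, ?_⟩
    · rw [area_tail1 v U k hend', harea]; ring
    · exact lastFall_tail1 v U k (by simp)
    · rw [← hlen]; exact getElem?_mid v _ U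
  · rintro v ⟨hv1, -⟩ v' ⟨hv'1, -⟩ he
    have h1 : v = (v ++ U :: List.replicate k D).take m := by rw [← hv1, take_cancel]
    have h2 : v' = (v' ++ U :: List.replicate k D).take m := by rw [← hv'1, take_cancel]
    rw [h1, h2]
    exact congrArg (List.take m) he
  · rintro mz ⟨hlen, hm, ha, hlf, hget⟩
    obtain ⟨v, x, hx, hvlen, heq⟩ := decomp_exact mz (by omega)
    rw [hlf] at heq hvlen
    have hvm : v.length = m := by omega
    have hxU : x = U := by
      rw [heq, ← hvm] at hget
      rw [getElem?_mid] at hget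
      exact (Option.some_inj.mp hget)
    subst hxU
    rw [heq] at hm ha
    have hend := endH_of_motzkin_tail1 v U k hm
    have hend' : heightAt v v.length = (k : ℤ) - 1 := by
      rw [hend]; simp [Move.step]
    have hnn := nonneg_of_motzkin_tail v _ hm.1
    have harea : area v = dd - k - (k : ℤ) * k + Gs k := by
      rw [area_tail1 v U k hend] at ha
      linarith [ha]
    exact ⟨v, ⟨hvm, hnn, hend', harea⟩, heq.symm⟩
  · rintro v ⟨-, -, hend, -⟩
    rw [weight_tail1_U v k hend]
lemma Dw_eq_zero_of_lt {n' dd l' : ℤ} (h : n' < l') : Dw n' dd l' = 0 := by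
  unfold Dw
  have hempty : {mz : List Move | (mz.length : ℤ) = n' ∧ IsMotzkin mz ∧ area mz = dd ∧
      (lastFall mz : ℤ) = l'} = ∅ := by
    ext mz
    simp only [Set.mem_setOf_eq, Set.mem_empty_iff_false, iff_false, not_and]
    intro h1 _ _
    have := lastFall_le_length mz
    omega
  rw [hempty, finsum_mem_empty]

lemma Dw_eq_zero_diag (N : ℕ) (dd : ℤ) (hN : 1 ≤ N) : Dw (N : ℤ) dd (N : ℤ) = 0 := by
  unfold Dw
  have hempty : {mz : List Move | (mz.length : ℤ) = (N : ℤ) ∧ IsMotzkin mz ∧ area mz = dd ∧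
      (lastFall mz : ℤ) = (N : ℤ)} = ∅ := by
    ext mz
    simp only [Set.mem_setOf_eq, Set.mem_empty_iff_false, iff_false, not_and]
    rintro h1 h2 _ h4
    have hlen : mz.length = N := by omega
    have hlf : N ≤ lastFall mz := by omega
    obtain ⟨v, hvlen, heq⟩ := decomp_ge mz hlf
    have hv0 : v = [] := List.length_eq_zero_iff.mp (by omega)
    rw [hv0, List.nil_append] at heq
    have hge := h2.1 1
    rw [heq, heightAt_replicate_D] at hge
    have hmin : min 1 N = 1 := by omega
    rw [hmin] at hge
    norm_num at hge
  rw [hempty, finsum_mem_empty]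

lemma finsum_mem_shrink {α M : Type*} [AddCommMonoid M] {f : α → M} {s t : Set α}
    (hts : t ⊆ s) (h0 : ∀ x ∈ s, x ∉ t → f x = 0) :
    ∑ᶠ x ∈ s, f x = ∑ᶠ x ∈ t, f x := by
  apply finsum_mem_inter_support_eq
  ext x
  simp only [Set.mem_inter_iff, Function.mem_support]
  constructor
  · rintro ⟨hx, hfx⟩
    refine ⟨?_, hfx⟩
    by_contra hnx
    exact hfx (h0 x hx hnx)
  · rintro ⟨hx, hfx⟩
    exact ⟨hts hx, hfx⟩

lemma innerSumEq (M : ℕ) (dd : ℤ) (Lb : ℕ) :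
    ∑ᶠ l' ∈ {l' : ℤ | (Lb : ℤ) ≤ l'}, Dw (M : ℤ) dd l'
      = ∑ᶠ mz ∈ {mz : List Move | mz.length = M ∧ IsMotzkin mz ∧ area mz = dd ∧
          Lb ≤ lastFall mz}, weight mz := by
  have h1 : ∑ᶠ l' ∈ {l' : ℤ | (Lb : ℤ) ≤ l'}, Dw (M : ℤ) dd l'
      = ∑ᶠ l' ∈ Set.Icc (Lb : ℤ) (M : ℤ), Dw (M : ℤ) dd l' := by
    refine finsum_mem_shrink (fun x hx => hx.1) (fun x hx hnx => Dw_eq_zero_of_lt ?_)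
    simp only [Set.mem_setOf_eq] at hx
    simp only [Set.mem_Icc, not_and, not_le] at hnx
    exact hnx hx
  rw [h1]
  have h2 : ∑ᶠ l' ∈ Set.Icc (Lb : ℤ) (M : ℤ), Dw (M : ℤ) dd l'
      = ∑ᶠ l' ∈ Set.Icc (Lb : ℤ) (M : ℤ),
          ∑ᶠ mz ∈ {mz : List Move | (mz.length : ℤ) = (M : ℤ) ∧ IsMotzkin mz ∧
            area mz = dd ∧ (lastFall mz : ℤ) = l'}, weight mz := rfl
  rw [h2]
  have hset : {mz : List Move | mz.length = M ∧ IsMotzkin mz ∧ area mz = dd ∧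
        Lb ≤ lastFall mz}
      = ⋃ l' ∈ Set.Icc (Lb : ℤ) (M : ℤ),
          {mz : List Move | (mz.length : ℤ) = (M : ℤ) ∧ IsMotzkin mz ∧
            area mz = dd ∧ (lastFall mz : ℤ) = l'} := by
    ext mz
    simp only [Set.mem_iUnion, Set.mem_Icc, Set.mem_setOf_eq, exists_prop]
    constructor
    · rintro ⟨h1', h2', h3', h4'⟩
      have := lastFall_le_length mz
      exact ⟨(lastFall mz : ℤ), ⟨by omega, by omega⟩, by omega, h2', h3', rfl⟩
    · rintro ⟨l', ⟨hl1, hl2⟩, h1', h2', h3', h4'⟩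
      exact ⟨by omega, h2', h3', by omega⟩
  rw [hset]
  refine (finsum_mem_biUnion ?_ (Set.finite_Icc _ _) ?_).symm
  · intro a _ b _ hab
    refine Set.disjoint_left.mpr fun mz hma hmb => hab ?_
    rw [← hma.2.2.2, ← hmb.2.2.2]
  · intro i _
    exact (List.finite_length_eq Move M).subset fun mz hmz => by
      have := hmz.1
      simp only [Set.mem_setOf_eq]
      omega

lemma Dw_eq (N : ℕ) (dd : ℤ) (L : ℕ) :
    Dw (N : ℤ) dd (L : ℤ) = ∑ᶠ mz ∈ {mz : List Move | mz.length = N ∧ IsMotzkin mz ∧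
      area mz = dd ∧ lastFall mz = L}, weight mz := by
  unfold Dw
  congr 1
  ext mz
  simp only [Set.mem_setOf_eq, Nat.cast_inj]

lemma LHS_split (m L : ℕ) (dd : ℤ) :
    ∑ᶠ mz ∈ {mz : List Move | mz.length = m + 1 + L ∧ IsMotzkin mz ∧ area mz = dd ∧
        lastFall mz = L}, weight mz
      = (∑ᶠ mz ∈ {mz : List Move | mz.length = m + 1 + L ∧ IsMotzkin mz ∧ area mz = dd ∧
          lastFall mz = L ∧ mz[m]? = some H}, weight mz)
      + ∑ᶠ mz ∈ {mz : List Move | mz.length = m + 1 + L ∧ IsMotzkin mz ∧ area mz = dd ∧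
          lastFall mz = L ∧ mz[m]? = some U}, weight mz := by
  have hset : {mz : List Move | mz.length = m + 1 + L ∧ IsMotzkin mz ∧ area mz = dd ∧
        lastFall mz = L}
      = {mz : List Move | mz.length = m + 1 + L ∧ IsMotzkin mz ∧ area mz = dd ∧
          lastFall mz = L ∧ mz[m]? = some H}
        ∪ {mz : List Move | mz.length = m + 1 + L ∧ IsMotzkin mz ∧ area mz = dd ∧
          lastFall mz = L ∧ mz[m]? = some U} := by
    ext mz
    simp only [Set.mem_union, Set.mem_setOf_eq]
    constructor
    · rintro ⟨h1, h2, h3, h4⟩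
      obtain ⟨v, x, hx, hvlen, heq⟩ := decomp_exact mz (by omega)
      rw [h4] at heq hvlen
      have hvm : v.length = m := by omega
      have hget : mz[m]? = some x := by
        rw [heq, ← hvm]
        exact getElem?_mid v _ x
      cases x with
      | H => exact Or.inl ⟨h1, h2, h3, h4, hget⟩
      | U => exact Or.inr ⟨h1, h2, h3, h4, hget⟩
      | D => exact absurd rfl hx
    · rintro (⟨h1, h2, h3, h4, -⟩ | ⟨h1, h2, h3, h4, -⟩) <;> exact ⟨h1, h2, h3, h4⟩
  rw [hset]
  refine finsum_mem_union ?_ ?_ ?_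
  · refine Set.disjoint_left.mpr fun mz hma hmb => ?_
    have h1 := hma.2.2.2.2
    have h2 := hmb.2.2.2.2
    rw [h1] at h2
    exact Move.noConfusion (Option.some_inj.mp h2)
  · exact (List.finite_length_eq Move (m + 1 + L)).subset fun mz hmz => hmz.1
  · exact (List.finite_length_eq Move (m + 1 + L)).subset fun mz hmz => hmz.1
lemma Gs_succ (K : ℕ) : Gs (K + 1) = Gs K + ((K + 1 : ℕ) : ℤ) := by
  rw [Gs, Gs, Finset.sum_range_succ]

lemma Pf_succ (K : ℕ) : Pf (K + 1) = ((K + 1 : ℕ) : ℤ) * Pf K := by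
  rw [Pf, Pf, Finset.prod_range_succ']
  have h : ∀ i ∈ Finset.range K, (((K + 1 : ℕ) : ℤ) - ((i + 1 : ℕ) : ℤ)) = ((K : ℤ) - i) := by
    intro i _; push_cast; ring
  rw [Finset.prod_congr rfl h]
  push_cast
  ring

/-- the weighted last-fall recurrence
`D(n,d,l) = (2l+1)·Σ_{l' ≥ l} D(n-1, d-l, l') + l²·Σ_{l' ≥ l-1} D(n-2, d-(2l-1), l')`. -/
theorem weighted_last_fall_recurrence (n d l : ℤ) (hn : 1 ≤ n) (hd : 0 ≤ d) (hl : 0 ≤ l) :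
    Dw n d l =
      (2 * l + 1) * (∑ᶠ l' ∈ {l' : ℤ | l ≤ l'}, Dw (n - 1) (d - l) l') +
      l ^ 2 * ∑ᶠ l' ∈ {l' : ℤ | l - 1 ≤ l'}, Dw (n - 2) (d - (2 * l - 1)) l' := by
  obtain ⟨N, rfl⟩ : ∃ N : ℕ, n = (N : ℤ) := ⟨n.toNat, by omega⟩
  obtain ⟨L, rfl⟩ : ∃ L : ℕ, l = (L : ℤ) := ⟨l.toNat, by omega⟩
  rcases lt_or_ge L N with hLN | hNL
  · -- main case L < N
    obtain ⟨m, rfl⟩ : ∃ m : ℕ, N = m + 1 + L := ⟨N - 1 - L, by omega⟩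
    have e1 : ((m + 1 + L : ℕ) : ℤ) - 1 = ((m + L : ℕ) : ℤ) := by push_cast; ring
    rw [Dw_eq (m + 1 + L) d L, LHS_split m L d, SUM_tail1_H m L d, SUM_tail1_U m L d,
      e1, innerSumEq (m + L) (d - (L : ℤ)) L, SUM_tail0 m L (d - (L : ℤ))]
    obtain rfl | ⟨K, rfl⟩ : L = 0 ∨ ∃ K, L = K + 1 := by
      rcases L with _ | K
      · exact Or.inl rfl
      · exact Or.inr ⟨K, rfl⟩
    · push_cast
      ring
    · have e2 : ((m + 1 + (K + 1) : ℕ) : ℤ) - 2 = ((m + K : ℕ) : ℤ) := by push_cast; ring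
      have e3 : ((K + 1 : ℕ) : ℤ) - 1 = (K : ℤ) := by push_cast; ring
      rw [e2, e3, innerSumEq (m + K) (d - (2 * ((K + 1 : ℕ) : ℤ) - 1)) K,
        SUM_tail0 m K (d - (2 * ((K + 1 : ℕ) : ℤ) - 1))]
      have harea : d - ((K + 1 : ℕ) : ℤ) - ((K + 1 : ℕ) : ℤ) * ((K + 1 : ℕ) : ℤ) + Gs (K + 1)
          = d - (2 * ((K + 1 : ℕ) : ℤ) - 1) - (K : ℤ) * (K : ℤ) + Gs K := by
        rw [Gs_succ]; push_cast; ring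
      rw [harea, Pf_succ]
      push_cast
      ring
  · -- degenerate case N ≤ L
    have hN1 : 1 ≤ N := by exact_mod_cast hn
    have hz1 : ∀ l' ∈ {l' : ℤ | (L : ℤ) ≤ l'}, Dw ((N : ℤ) - 1) (d - (L : ℤ)) l' = 0 := by
      intro l' hl'
      simp only [Set.mem_setOf_eq] at hl'
      exact Dw_eq_zero_of_lt (by omega)
    have hz2 : ∀ l' ∈ {l' : ℤ | (L : ℤ) - 1 ≤ l'},
        Dw ((N : ℤ) - 2) (d - (2 * (L : ℤ) - 1)) l' = 0 := by
      intro l' hl'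
      simp only [Set.mem_setOf_eq] at hl'
      exact Dw_eq_zero_of_lt (by omega)
    rw [finsum_mem_congr rfl hz1, finsum_mem_congr rfl hz2, finsum_mem_zero, finsum_mem_zero]
    rcases eq_or_lt_of_le hNL with hEq | hLt
    · obtain rfl := hEq
      rw [Dw_eq_zero_diag N d hN1]
      ring
    · rw [Dw_eq_zero_of_lt (by omega : (N : ℤ) < (L : ℤ))]
      ring
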